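/- Let I and J be infinite sequences that are mutually NIP-indiscernible over (B';C'). Let I* be a continuation of I as in the extension lemma, taken with respect to sets B ⊇ B'∪J and C ⊇ C'. Then I⌢I* and J are mutually NIP-indiscernible over (B';C'). -/

import Mathlib

open FirstOrder Set

namespace DepDividing

universe u

variable (L : FirstOrder.Language.{u, u}) (M : Type u) [L.Structure M]

/-- A partitioned formula `φ(x;y)` (with `x : α` the object variables and `y : β`
the parameter variables) has the independence property (witnessed in the monster `M`). -/
def HasIP {α β : Type*} (φ : L.Formula (α ⊕ β)) : Prop :=
  ∃ (a : ℕ → α → M) (b : Set ℕ → β → M),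
    ∀ (i : ℕ) (S : Set ℕ), φ.Realize (Sum.elim (a i) (b S)) ↔ i ∈ S

/-- A partitioned formula is NIP if it does not have the independence property. -/
def IsNIPFml {α β : Type*} (φ : L.Formula (α ⊕ β)) : Prop := ¬ HasIP L M φ

/-- The set of elements of `M` appearing in a sequence of tuples. -/
def seqElems {ι γ : Type*} (s : ι → γ → M) : Set M :=
  Set.range fun p : ι × γ => s p.1 p.2

/-- `s` is an indiscernible sequence of `γ`-tuples over the set `A`. -/
def Indisc (A : Set M) {ι : Type*} [LinearOrder ι] {γ : Type*} (s : ι → γ → M) : Prop :=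
  ∀ (n m : ℕ) (φ : L.Formula ((Fin n × γ) ⊕ Fin m)) (a : Fin m → M),
    (∀ k, a k ∈ A) → ∀ i j : Fin n → ι, StrictMono i → StrictMono j →
      (φ.Realize (Sum.elim (fun p => s (i p.1) p.2) a) ↔
        φ.Realize (Sum.elim (fun p => s (j p.1) p.2) a))

/-- `s` is NIP-indiscernible over `(B;C)`: NIP formulas with unrestricted parameters
from `B` and restricted parameters from `C` cannot distinguish increasing tuples of `s`. -/
def NIPIndisc (B C : Set M) {ι : Type*} [LinearOrder ι] {γ : Type*} (s : ι → γ → M) : Prop :=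
  ∀ (n m r : ℕ) (φ : L.Formula (((Fin n × γ) ⊕ Fin m) ⊕ Fin r))
    (b : Fin m → M) (c : Fin r → M), IsNIPFml L M φ →
    (∀ k, b k ∈ B) → (∀ k, c k ∈ C) →
    ∀ i j : Fin n → ι, StrictMono i → StrictMono j →
      (φ.Realize (Sum.elim (Sum.elim (fun p => s (i p.1) p.2) b) c) ↔
        φ.Realize (Sum.elim (Sum.elim (fun p => s (j p.1) p.2) b) c))

/-- A family of sequences is mutually NIP-indiscernible over `(B;C)`:
each sequence is NIP-indiscernible over `B` together with all the others (and `C`). -/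
def MutNIPIndisc (B C : Set M) {κι ι γ : Type*} [LinearOrder ι]
    (I : κι → ι → γ → M) : Prop :=
  ∀ α, NIPIndisc L M (B ∪ ⋃ β ∈ {β | β ≠ α}, seqElems M (I β)) C (I α)

/-- An instance `φ(x, c)` of a formula, given by a partitioned formula together with
an assignment of its parameter variables. -/
structure FmlInst (γ : Type*) where
  n : ℕ
  fml : L.Formula (γ ⊕ Fin n)
  par : Fin n → M

/-- Realization of a formula instance at a tuple. -/
def FmlInst.Realize {γ : Type*} (F : FmlInst L M γ) (x : γ → M) : Prop :=
  F.fml.Realize (Sum.elim x F.par)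

/-- A formula instance is NIP if its underlying partitioned formula is NIP. -/
def FmlInst.IsNIP {γ : Type*} (F : FmlInst L M γ) : Prop := IsNIPFml L M F.fml

/-- `φ(x, c)` divides over `A`: there is an `A`-indiscernible sequence starting at `c`
whose corresponding instances are `k`-inconsistent for some `k`. -/
def DividesOver {γ : Type*} (F : FmlInst L M γ) (A : Set M) : Prop :=
  ∃ c : ℕ → Fin F.n → M, c 0 = F.par ∧ Indisc L M A c ∧
    ∃ k : ℕ, ∀ s : Finset ℕ, s.card = k →
      ¬ ∃ x : γ → M, ∀ i ∈ s, F.fml.Realize (Sum.elim x (c i))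

/-- A partial type over a set `C`: a set of formula instances with parameters in `C`. -/
structure PartialType (γ : Type*) (C : Set M) where
  fmls : Set (FmlInst L M γ)
  par_mem : ∀ F ∈ fmls, Set.range (FmlInst.par F) ⊆ C

/-- A tuple realizes a partial type if it realizes every formula instance in it. -/
def PartialType.Realize {γ : Type*} {C : Set M} (p : PartialType L M γ C) (x : γ → M) : Prop :=
  ∀ F ∈ p.fmls, FmlInst.Realize L M F x

/-- The complete type of the tuple `d` over the set `A` (as a partial type). -/
def typeOf {γ : Type*} (d : γ → M) (A : Set M) : PartialType L M γ A :=
  ⟨{F | Set.range F.par ⊆ A ∧ FmlInst.Realize L M F d}, fun _ hF => hF.1⟩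

/-- A partial type divides over `A` if it contains a formula instance dividing over `A`. -/
def TypeDividesOver {γ : Type*} {C : Set M} (p : PartialType L M γ C) (A : Set M) : Prop :=
  ∃ F ∈ p.fmls, DividesOver L M F A

/-- `T` (i.e. the theory of the monster `M`) has dependent dividing: whenever `M₀ ⪯ N`
and a complete type over `N` divides over `M₀`, it contains an instance of an NIP
formula dividing over `M₀`. -/
def DependentDividing : Prop :=
  ∀ M₀ N : L.ElementarySubstructure M, (M₀ : Set M) ⊆ (N : Set M) →
    ∀ (γ : Type u) (d : γ → M),
      TypeDividesOver L M (typeOf L M d (N : Set M)) (M₀ : Set M) →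
      ∃ F ∈ (typeOf L M d (N : Set M)).fmls,
        FmlInst.IsNIP L M F ∧ DividesOver L M F (M₀ : Set M)

/-- A partitioned formula has the tree property of the second kind. -/
def HasTP2 {γ : Type*} {m : ℕ} (φ : L.Formula (γ ⊕ Fin m)) : Prop :=
  ∃ b : ℕ → ℕ → Fin m → M,
    (∀ (α : ℕ) (s : Finset ℕ), s.card = 2 →
      ¬ ∃ x : γ → M, ∀ i ∈ s, φ.Realize (Sum.elim x (b α i))) ∧
    (∀ f : ℕ → ℕ, ∃ x : γ → M, ∀ α : ℕ, φ.Realize (Sum.elim x (b α (f α))))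

/-- The theory of `M` is NTP₂: no formula has TP₂. -/
def IsNTP2 : Prop :=
  ∀ (γ : Type u) (m : ℕ) (φ : L.Formula (γ ⊕ Fin m)), ¬ HasTP2 L M φ

/-- There is an inp-pattern of depth `κι` in the partial type `p`. -/
def HasInpPattern {γ : Type*} {C : Set M} (p : PartialType L M γ C) (κι : Type*) : Prop :=
  ∃ (nn : κι → ℕ) (φ : ∀ α, L.Formula (γ ⊕ Fin (nn α)))
    (b : ∀ α, ℕ → Fin (nn α) → M) (k : κι → ℕ),
    (∀ (α : κι) (s : Finset ℕ), s.card = k α →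
      ¬ ∃ x : γ → M, ∀ i ∈ s, (φ α).Realize (Sum.elim x (b α i))) ∧
    (∀ f : κι → ℕ, ∃ x : γ → M, PartialType.Realize L M p x ∧
      ∀ α, (φ α).Realize (Sum.elim x (b α (f α))))

/-- There is an NIP-inp-pattern of depth `κι` in `p`: an inp-pattern all whose
formulas are NIP. -/
def HasNIPInpPattern {γ : Type*} {C : Set M} (p : PartialType L M γ C) (κι : Type*) : Prop :=
  ∃ (nn : κι → ℕ) (φ : ∀ α, L.Formula (γ ⊕ Fin (nn α)))
    (b : ∀ α, ℕ → Fin (nn α) → M) (k : κι → ℕ),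
    (∀ α, IsNIPFml L M (φ α)) ∧
    (∀ (α : κι) (s : Finset ℕ), s.card = k α →
      ¬ ∃ x : γ → M, ∀ i ∈ s, (φ α).Realize (Sum.elim x (b α i))) ∧
    (∀ f : κι → ℕ, ∃ x : γ → M, PartialType.Realize L M p x ∧
      ∀ α, (φ α).Realize (Sum.elim x (b α (f α))))

/-- There is an NIP-ict-pattern of depth `κι` in `p`. -/
def HasNIPIctPattern {γ : Type*} {C : Set M} (p : PartialType L M γ C) (κι : Type*) : Prop :=
  ∃ (nn : κι → ℕ) (φ : ∀ α, L.Formula (γ ⊕ Fin (nn α)))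
    (b : ∀ α, ℕ → Fin (nn α) → M),
    (∀ α, IsNIPFml L M (φ α)) ∧
    (∀ f : κι → ℕ, ∃ x : γ → M, PartialType.Realize L M p x ∧
      ∀ (α : κι) (i : ℕ), ((φ α).Realize (Sum.elim x (b α i)) ↔ i = f α))

/-- The NIP dp-rank of `p` is at least `κι`: there are a realization `d` of `p` and
`κι`-many mutually NIP-indiscernible sequences over `C`, none of which is
NIP-indiscernible over `Cd`. -/
def NIPdpGE {γ : Type*} {C : Set M} (p : PartialType L M γ C) (κι : Type*) : Prop :=
  ∃ d : γ → M, PartialType.Realize L M p d ∧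
    ∃ (γ' : Type u) (I : κι → ℕ → γ' → M),
      MutNIPIndisc L M ∅ C I ∧
      ∀ α, ¬ NIPIndisc L M ∅ (C ∪ Set.range d) (I α)

/-- Condition (5): witnesses over an auxiliary set `D`. -/
def NIPdpWitnessOver {γ : Type*} {C : Set M} (p : PartialType L M γ C) (κι : Type*) : Prop :=
  ∃ d : γ → M, PartialType.Realize L M p d ∧
    ∃ (D : Set M) (γ' : Type u) (I : κι → ℕ → γ' → M),
      MutNIPIndisc L M D C I ∧
      ∀ α, ¬ NIPIndisc L M D (C ∪ Set.range d) (I α)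

/-- Concatenation of two sequences of tuples, indexed by the lexicographic sum. -/
def concatSeq {ι κ γ : Type*} (s : ι → γ → M) (t : κ → γ → M) : ι ⊕ₗ κ → γ → M :=
  fun i => Sum.elim s t (ofLex i)

/-- The property `S_{k,n}` for the pair `(𝓘, a)` over `A`. -/
def SknProp (A : Set M) {γ : Type*} (a : γ → M) {κι ι γ' : Type*} [LinearOrder ι]
    (I : κι → ι → γ' → M) (k n : ℕ) : Prop :=
  ∀ B : Set M, MutNIPIndisc L M B A I →
    ∀ e : Fin (k + n) → κι, Function.Injective e →
      ∃ s : Finset (Fin (k + n)), s.card = n ∧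
        MutNIPIndisc L M B (A ∪ Set.range a)
          (fun β : {x // x ∈ s} => I (e β.1))

/-- `T` has dependent dividing with respect to the reduct to `L'` (along `f : L' →ᴸ L`):
dividing of complete types over models is witnessed by instances of NIP `L'`-formulas. -/
def DependentDividingWrt (L' : FirstOrder.Language.{u, u}) [L'.Structure M]
    (f : L' →ᴸ L) : Prop :=
  ∀ M₀ N : L.ElementarySubstructure M, (M₀ : Set M) ⊆ (N : Set M) →
    ∀ (γ : Type u) (d : γ → M),
      TypeDividesOver L M (typeOf L M d (N : Set M)) (M₀ : Set M) →
      ∃ (n : ℕ) (ψ : L'.Formula (γ ⊕ Fin n)) (c : Fin n → M),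
        Set.range c ⊆ (N : Set M) ∧ IsNIPFml L' M ψ ∧
        (f.onFormula ψ).Realize (Sum.elim d c) ∧
        DividesOver L M ⟨n, f.onFormula ψ, c⟩ (M₀ : Set M)

/-- The number of `φ`-types over the finite parameter set `A` consistent with `p`
(the dual trace count). -/
noncomputable def traceCount {δ γ : Type*} {C : Set M} (φ : L.Formula (δ ⊕ γ))
    (p : PartialType L M γ C) (A : Finset (δ → M)) : ℕ :=
  Set.ncard (Set.range fun d : {d : γ → M // PartialType.Realize L M p d} =>
    fun a : {x // x ∈ A} => φ.Realize (Sum.elim a.1 d.1))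

/-- The dual `φ`-type count of `p` is `O(|A|^r)` over finite subsets of `base`. -/
def VCdualBound {δ γ : Type*} {C : Set M} (φ : L.Formula (δ ⊕ γ))
    (p : PartialType L M γ C) (base : Set (δ → M)) (r : ℝ) : Prop :=
  ∃ c : ℝ, ∀ A : Finset (δ → M), ↑A ⊆ base →
    (traceCount L M φ p A : ℝ) ≤ c * (A.card : ℝ) ^ r


section Aux

variable {L} {M}

/-- Realization of a formula only depends on the values of the valuation on free variables. -/
lemma realize_congr_freeVar {α : Type*} [DecidableEq α] (φ : L.Formula α)
    {v v' : α → M} (h : ∀ a ∈ φ.freeVarFinset, v a = v' a) :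
    φ.Realize v ↔ φ.Realize v' := by
  have hs : (↑φ.freeVarFinset : Set α) ⊆ ↑φ.freeVarFinset := Set.Subset.rfl
  have hvv : (v ∘ (↑) : (↑φ.freeVarFinset : Set α) → M) = v' ∘ (↑) :=
    funext fun a => h a.1 (by exact_mod_cast a.2)
  unfold Language.Formula.Realize
  rw [← Language.BoundedFormula.realize_restrictFreeVar' hs (v := v) (xs := default),
    ← Language.BoundedFormula.realize_restrictFreeVar' hs (v := v') (xs := default), hvv]

/-- NIP is preserved under relabelling that respects the partition. -/
lemma isNIPFml_relabel {α β α' β' : Type*} (f : α → α') (g : β → β')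
    (φ : L.Formula (α ⊕ β)) (h : IsNIPFml L M φ) :
    IsNIPFml L M (φ.relabel (Sum.map f g)) := by
  rintro ⟨a, bb, hab⟩
  refine h ⟨fun i => a i ∘ f, fun S => bb S ∘ g, fun i S => ?_⟩
  have := hab i S
  rw [Language.Formula.realize_relabel] at this
  have hc : (Sum.elim (a i) (bb S)) ∘ (Sum.map f g) = Sum.elim (a i ∘ f) (bb S ∘ g) := by
    funext x; rcases x with x | x <;> rfl
  rwa [hc] at this

end Aux

/-- If `I` and `J` are infinite mutually NIP-indiscernible sequences over `(B';C')` and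
`I*` is a continuation of `I` as in the extension lemma with respect to `B ⊇ B' ∪ J` and
`C ⊇ C'`, then `I⌢I*` and `J` are mutually NIP-indiscernible over `(B';C')`. -/
theorem extend_mutually_NIPIndisc
    {ι : Type u} [LinearOrder ι] [Infinite ι] [NoMaxOrder ι] {γ : Type u}
    {ι₂ : Type u} [LinearOrder ι₂] [Infinite ι₂] {γ₂ : Type u}
    (I : ι → γ → M) (J : ι₂ → γ₂ → M) (hind : Indisc L M (∅ : Set M) I)
    (B' C' B C : Set M) (hB : B' ∪ seqElems M J ⊆ B) (hC : C' ⊆ C)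
    (hIJ : NIPIndisc L M (B' ∪ seqElems M J) C' I)
    (hJI : NIPIndisc L M (B' ∪ seqElems M I) C' J)
    {lam : Type u} [LinearOrder lam] (Istar : lam → γ → M)
    (hstar : ∀ B'' C'' : Set M, B'' ⊆ B → C'' ⊆ C →
      NIPIndisc L M B'' C'' I → NIPIndisc L M B'' C'' (concatSeq M I Istar)) :
    NIPIndisc L M (B' ∪ seqElems M J) C' (concatSeq M I Istar) ∧
      NIPIndisc L M (B' ∪ seqElems M (concatSeq M I Istar)) C' J := by
  classical
  letI : DecidableEq γ₂ := Classical.decEq _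
  have part1 : NIPIndisc L M (B' ∪ seqElems M J) C' (concatSeq M I Istar) :=
    hstar _ _ hB hC hIJ
  refine ⟨part1, ?_⟩
  intro n m r φ b c hNIP hbmem hcmem i j hi hj
  by_cases hall : ∀ k, b k ∈ B'
  · exact hJI n m r φ b c hNIP (fun k => Or.inl (hall k)) hcmem i j hi hj
  · push_neg at hall
    obtain ⟨k₀, hk₀⟩ := hall
    have hdec : ∀ k : Fin m, b k ∉ B' → ∃ p : (ι ⊕ₗ lam) × γ,
        b k = concatSeq M I Istar p.1 p.2 := by
      intro k hk
      rcases hbmem k with h | h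
      · exact absurd h hk
      · obtain ⟨p, hp⟩ := h
        exact ⟨p, hp.symm⟩
    choose pick hpick using hdec
    set T : Finset (ι ⊕ₗ lam) :=
      Finset.univ.image (fun k : {k : Fin m // b k ∉ B'} => (pick k.1 k.2).1) with hT
    set e := T.orderIsoOfFin rfl with he
    set u : Fin T.card → ι ⊕ₗ lam := fun p => (e p : ι ⊕ₗ lam) with hu_def
    have hu : StrictMono u := fun a b' hab => Subtype.coe_lt_coe.mpr (e.strictMono hab)
    obtain ⟨f, hf⟩ := Nat.exists_strictMono ι
    set v : Fin T.card → ι ⊕ₗ lam := fun p => toLex (Sum.inl (f p)) with hv_def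
    have hv : StrictMono v := fun a b' hab => Sum.Lex.inl_lt_inl_iff.mpr (hf hab)
    have hmemT : ∀ k : {k : Fin m // b k ∉ B'}, (pick k.1 k.2).1 ∈ T := fun k =>
      Finset.mem_image_of_mem _ (Finset.mem_univ k)
    set pidx : {k : Fin m // b k ∉ B'} → Fin T.card :=
      fun k => e.symm ⟨(pick k.1 k.2).1, hmemT k⟩ with hpidx_def
    have hupidx : ∀ k, u (pidx k) = (pick k.1 k.2).1 := by
      intro k
      simp only [hu_def, hpidx_def, OrderIso.apply_symm_apply]
    set Q : Finset (Fin n × γ₂) := φ.freeVarFinset.filterMap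
      (fun x => Sum.elim (fun y => Sum.elim some (fun _ => none) y) (fun _ => none) x)
      (by rintro ((q | k) | t) ((q' | k') | t') w hw hw' <;> simp_all) with hQdef
    have hQ : ∀ q : Fin n × γ₂, q ∈ Q ↔ Sum.inl (Sum.inl q) ∈ φ.freeVarFinset := by
      intro q
      simp only [hQdef, Finset.mem_filterMap]
      constructor
      · rintro ⟨(q' | k) | t, hmem, hval⟩ <;> simp_all
      · exact fun h => ⟨_, h, rfl⟩
    set Pset : Finset (Fin m) := Finset.univ.filter (fun k => b k ∈ B') with hPdef
    set bpar : (Fin n → ι₂) → Fin (Q.card + Pset.card) → M := fun t s =>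
      Sum.elim (fun a : Fin Q.card => J (t (Q.equivFin.symm a).1.1) (Q.equivFin.symm a).1.2)
        (fun a : Fin Pset.card => b (Pset.equivFin.symm a).1)
        (finSumFinEquiv.symm s) with hbpar_def
    have hbparmem : ∀ t s, bpar t s ∈ B' ∪ seqElems M J := by
      intro t s
      simp only [hbpar_def]
      cases hsp : finSumFinEquiv.symm s with
      | inl a =>
        exact Or.inr ⟨((t (Q.equivFin.symm a).1.1), (Q.equivFin.symm a).1.2), rfl⟩
      | inr a =>
        left
        have hmem := (Pset.equivFin.symm a).2
        exact (Finset.mem_filter.mp hmem).2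
    set ρ : (((Fin n × γ₂) ⊕ Fin m) ⊕ Fin r) →
        (((Fin T.card × γ) ⊕ Fin (Q.card + Pset.card)) ⊕ Fin r) :=
      Sum.map
        (Sum.elim
          (fun q => if hq : q ∈ Q then
              Sum.inr (finSumFinEquiv (Sum.inl (Q.equivFin ⟨q, hq⟩)))
            else Sum.inl (pidx ⟨k₀, hk₀⟩, (pick k₀ hk₀).2))
          (fun k => if hk : b k ∈ B' then
              Sum.inr (finSumFinEquiv (Sum.inr (Pset.equivFin ⟨k,
                Finset.mem_filter.mpr ⟨Finset.mem_univ _, hk⟩⟩)))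
            else Sum.inl (pidx ⟨k, hk⟩, (pick k hk).2)))
        id with hρ_def
    set ψ : L.Formula (((Fin T.card × γ) ⊕ Fin (Q.card + Pset.card)) ⊕ Fin r) :=
      φ.relabel ρ with hψ_def
    have hψNIP : IsNIPFml L M ψ := by
      rw [hψ_def, hρ_def]
      exact isNIPFml_relabel _ _ φ hNIP
    set bt : (Fin T.card → ι ⊕ₗ lam) → Fin m → M := fun z k =>
      if hk : b k ∈ B' then b k
      else concatSeq M I Istar (z (pidx ⟨k, hk⟩)) (pick k hk).2 with hbt_def
    have hbtu : bt u = b := by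
      funext k
      simp only [hbt_def]
      split_ifs with hk
      · rfl
      · rw [hupidx ⟨k, hk⟩, ← hpick k hk]
    have hbtvmem : ∀ k, bt v k ∈ B' ∪ seqElems M I := by
      intro k
      simp only [hbt_def]
      split_ifs with hk
      · exact Or.inl hk
      · exact Or.inr ⟨(f (pidx ⟨k, hk⟩), (pick k hk).2), rfl⟩
    have bridge : ∀ (t : Fin n → ι₂) (z : Fin T.card → ι ⊕ₗ lam),
        (ψ.Realize (Sum.elim (Sum.elim
            (fun p : Fin T.card × γ => concatSeq M I Istar (z p.1) p.2) (bpar t)) c) ↔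
          φ.Realize (Sum.elim (Sum.elim
            (fun p : Fin n × γ₂ => J (t p.1) p.2) (bt z)) c)) := by
      intro t z
      rw [hψ_def, Language.Formula.realize_relabel]
      refine realize_congr_freeVar φ ?_
      intro x hx
      rcases x with (q | k) | tt
      · have hq : q ∈ Q := (hQ q).2 hx
        simp only [hρ_def, Function.comp_apply, Sum.map_inl, Sum.elim_inl, dif_pos hq,
          Sum.elim_inr, hbpar_def, Equiv.symm_apply_apply]
      · by_cases hk : b k ∈ B'
        · simp only [hρ_def, Function.comp_apply, Sum.map_inl, Sum.elim_inl, Sum.elim_inr,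
            dif_pos hk, hbpar_def, Equiv.symm_apply_apply, hbt_def]
        · simp only [hρ_def, Function.comp_apply, Sum.map_inl, Sum.elim_inl, Sum.elim_inr,
            dif_neg hk, hbt_def]
      · simp only [hρ_def, Function.comp_apply, Sum.map_inr, Sum.elim_inr, id]
    have h1 := part1 T.card (Q.card + Pset.card) r ψ (bpar i) c hψNIP (hbparmem i)
      hcmem u v hu hv
    have h2 := part1 T.card (Q.card + Pset.card) r ψ (bpar j) c hψNIP (hbparmem j)
      hcmem u v hu hv
    rw [bridge i u, bridge i v, hbtu] at h1
    rw [bridge j u, bridge j v, hbtu] at h2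
    exact h1.trans ((hJI n m r φ (bt v) c hNIP hbtvmem hcmem i j hi hj).trans h2.symm)


end DepDividing
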